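/- Let (ν_k)_{k∈ℤ₊} be a non-increasing sequence of positive reals satisfying ln ν_k = −k ln k + Ak + o(k) as k → ∞, for some constant A ∈ ℝ. Then the counting function N(λ) := #{k ∈ ℤ₊ : ν_k > λ} satisfies N(λ) = Φ₁(λ; A) + o(|ln λ|/ln₂(λ)²) as λ ↓ 0, where ln₂(λ) := ln|ln λ| and Φ₁(λ;A) := (|ln λ|/ln₂(λ))(1 + ln(ln₂(λ))/ln₂(λ) + A/ln₂(λ)). -/

import Mathlib

open Filter Asymptotics
open scoped Topology

/-- Iterated logarithm `ln₂(x) = ln |ln x|`. -/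
noncomputable def lnTwo (x : ℝ) : ℝ := Real.log |Real.log x|

/-- `Φ₀(x) = |ln x| / ln₂(x)`. -/
noncomputable def Phi0 (x : ℝ) : ℝ := |Real.log x| / lnTwo x

/-- `Φ₁(x;C) = Φ₀(x)(1 + ln(ln₂ x)/ln₂ x + C/ln₂ x)`. -/
noncomputable def Phi1 (x C : ℝ) : ℝ :=
  Phi0 x * (1 + Real.log (lnTwo x) / lnTwo x + C / lnTwo x)

noncomputable def gfun (A y : ℝ) : ℝ := y * Real.log y - A * y

noncomputable def mfun (A c L : ℝ) : ℝ :=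
  L / Real.log L * (1 + (Real.log (Real.log L) + A + c) / Real.log L)

lemma key_id (A c L : ℝ) (hL : 0 < L) (ht : 0 < Real.log L)
    (hw : 0 < 1 + (Real.log (Real.log L) + A + c) / Real.log L) :
    (gfun A (mfun A c L) - L) * Real.log L / L =
      c + Real.log (1 + (Real.log (Real.log L) + A + c) / Real.log L)
        + (Real.log (Real.log L) + A + c) *
          (Real.log (1 + (Real.log (Real.log L) + A + c) / Real.log L)
            - Real.log (Real.log L) - A) / Real.log L := by
  have h1 : Real.log (mfun A c L) =
      Real.log L - Real.log (Real.log L)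
        + Real.log (1 + (Real.log (Real.log L) + A + c) / Real.log L) := by
    rw [mfun, Real.log_mul (by positivity) hw.ne', Real.log_div hL.ne' ht.ne']
  rw [gfun, h1, mfun]
  field_simp
  ring

-- log t / t → 0
lemma h_log_div : Tendsto (fun t : ℝ => Real.log t / t) atTop (𝓝 0) := by
  have := Real.tendsto_pow_log_div_mul_add_atTop 1 0 1 one_ne_zero
  simpa using this

lemma h_sq_div : Tendsto (fun t : ℝ => (Real.log t) ^ 2 / t) atTop (𝓝 0) := by
  have := Real.tendsto_pow_log_div_mul_add_atTop 1 0 2 one_ne_zero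
  simpa using this

lemma h_w (B : ℝ) : Tendsto (fun t : ℝ => (Real.log t + B) / t) atTop (𝓝 0) := by
  have h2 : Tendsto (fun t : ℝ => B / t) atTop (𝓝 0) :=
    tendsto_const_nhds.div_atTop tendsto_id
  have := h_log_div.add h2
  simpa [add_div] using this

lemma h_r (B : ℝ) :
    Tendsto (fun t : ℝ => Real.log (1 + (Real.log t + B) / t)) atTop (𝓝 0) := by
  have h1 : Tendsto (fun t : ℝ => 1 + (Real.log t + B) / t) atTop (𝓝 1) := by
    simpa using tendsto_const_nhds.add (h_w B)
  have := (Real.continuousAt_log one_ne_zero).tendsto.comp h1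
  simpa [Function.comp_def] using this

-- P t = (log t + B)*(log t + B') / t → 0
lemma h_P (B B' : ℝ) :
    Tendsto (fun t : ℝ => (Real.log t + B) * (Real.log t + B') / t) atTop (𝓝 0) := by
  have h := (h_sq_div.add (h_log_div.const_mul (B + B'))).add
    ((tendsto_const_nhds.div_atTop tendsto_id : Tendsto (fun t : ℝ => (B * B') / t) atTop (𝓝 0)))
  have heq : ∀ t : ℝ, (Real.log t) ^ 2 / t + (B + B') * (Real.log t / t) + B * B' / t
      = (Real.log t + B) * (Real.log t + B') / t := fun t => by ring
  simpa using h.congr heq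

lemma aux_t (A c : ℝ) : Tendsto (fun t : ℝ =>
    c + Real.log (1 + (Real.log t + A + c) / t)
      + (Real.log t + A + c) * (Real.log (1 + (Real.log t + A + c) / t)
        - Real.log t - A) / t) atTop (𝓝 c) := by
  have hw := h_w (A + c)
  have hr := h_r (A + c)
  have hwr := hw.mul hr
  have hP := h_P (A + c) A
  -- s t := w t * r t - P t → 0
  have hs : Tendsto (fun t : ℝ =>
      (Real.log t + A + c) * (Real.log (1 + (Real.log t + A + c) / t)
        - Real.log t - A) / t) atTop (𝓝 0) := by
    have h := hwr.sub hP
    have heq : ∀ t : ℝ,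
        (Real.log t + (A + c)) / t * Real.log (1 + (Real.log t + (A + c)) / t)
          - (Real.log t + (A + c)) * (Real.log t + A) / t
        = (Real.log t + A + c) * (Real.log (1 + (Real.log t + A + c) / t)
            - Real.log t - A) / t := by
      intro t
      have : Real.log t + (A + c) = Real.log t + A + c := by ring
      rw [this]; ring
    simpa using h.congr heq
  have hr' : Tendsto (fun t : ℝ => Real.log (1 + (Real.log t + A + c) / t)) atTop (𝓝 0) := by
    have : ∀ t : ℝ, Real.log (1 + (Real.log t + (A + c)) / t)
        = Real.log (1 + (Real.log t + A + c) / t) := fun t => by ring_nf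
    simpa using hr.congr this
  have := ((tendsto_const_nhds : Tendsto (fun _ : ℝ => c) atTop (𝓝 c)).add hr').add hs
  simpa using this

lemma key_tendsto (A c : ℝ) :
    Tendsto (fun L : ℝ => (gfun A (mfun A c L) - L) * Real.log L / L) atTop (𝓝 c) := by
  have h0 := (aux_t A c).comp Real.tendsto_log_atTop
  have hw0 : Tendsto (fun L : ℝ =>
      (Real.log (Real.log L) + A + c) / Real.log L) atTop (𝓝 0) := by
    have := (h_w (A + c)).comp Real.tendsto_log_atTop
    refine this.congr fun L => ?_
    simp only [Function.comp]; ring_nf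
  refine h0.congr' ?_
  filter_upwards [eventually_gt_atTop (0 : ℝ),
    Real.tendsto_log_atTop.eventually_gt_atTop 0,
    hw0.eventually (eventually_gt_nhds (by norm_num : (-1 : ℝ) < 0))] with L hL ht hw
  have hw' : 0 < 1 + (Real.log (Real.log L) + A + c) / Real.log L := by linarith
  rw [key_id A c L hL ht hw']
  simp only [Function.comp]

lemma hX : Tendsto (fun L : ℝ => L / Real.log L) atTop atTop := by
  have h1 : Tendsto (fun L : ℝ => Real.log L / L) atTop (𝓝[>] 0) := by
    rw [tendsto_nhdsWithin_iff]
    refine ⟨h_log_div, ?_⟩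
    filter_upwards [eventually_gt_atTop (1 : ℝ)] with L hL
    exact Set.mem_Ioi.2 (div_pos (Real.log_pos hL) (by linarith))
  have := h1.inv_tendsto_nhdsGT_zero
  refine this.congr fun L => ?_
  simp [Pi.inv_apply, inv_div]

lemma hX2 : Tendsto (fun L : ℝ => L / (Real.log L) ^ 2) atTop atTop := by
  have h1 : Tendsto (fun L : ℝ => (Real.log L) ^ 2 / L) atTop (𝓝[>] 0) := by
    rw [tendsto_nhdsWithin_iff]
    refine ⟨h_sq_div, ?_⟩
    filter_upwards [eventually_gt_atTop (1 : ℝ)] with L hL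
    exact Set.mem_Ioi.2 (div_pos (pow_pos (Real.log_pos hL) 2) (by linarith))
  have := h1.inv_tendsto_nhdsGT_zero
  refine this.congr fun L => ?_
  simp [Pi.inv_apply, inv_div]

lemma hmfun (A c : ℝ) : Tendsto (mfun A c) atTop atTop := by
  have h1 : Tendsto (fun L : ℝ =>
      1 + (Real.log (Real.log L) + A + c) / Real.log L) atTop (𝓝 1) := by
    have := (h_w (A + c)).comp Real.tendsto_log_atTop
    have h2 : Tendsto (fun L : ℝ =>
        (Real.log (Real.log L) + A + c) / Real.log L) atTop (𝓝 0) := by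
      refine this.congr fun L => ?_; simp only [Function.comp]; ring_nf
    simpa using tendsto_const_nhds.add h2
  exact Tendsto.pos_mul_atTop one_pos h1 hX |>.congr fun L => mul_comm _ _

lemma gfun_strictMonoOn (A : ℝ) : StrictMonoOn (gfun A) (Set.Ici (Real.exp A)) := by
  have hpos : ∀ y ∈ Set.Ici (Real.exp A), (0 : ℝ) < y := fun y hy =>
    lt_of_lt_of_le (Real.exp_pos A) hy
  apply strictMonoOn_of_deriv_pos (convex_Ici _)
  · refine ContinuousOn.sub ?_ (continuousOn_const.mul continuousOn_id)
    exact continuousOn_id.mul (Real.continuousOn_log.mono fun y hy => (hpos y hy).ne')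
  · intro y hy
    rw [interior_Ici] at hy
    have hy0 : (0 : ℝ) < y := lt_trans (Real.exp_pos A) hy
    have hd : HasDerivAt (gfun A) (Real.log y + 1 - A * 1) y := by
      exact (Real.hasDerivAt_mul_log hy0.ne').sub ((hasDerivAt_id y).const_mul A)
    rw [hd.deriv]
    have : A < Real.log y := (Real.lt_log_iff_exp_lt hy0).2 hy
    linarith

lemma h_w_L (B : ℝ) :
    Tendsto (fun L : ℝ => (Real.log (Real.log L) + B) / Real.log L) atTop (𝓝 0) :=
  ((h_w B).comp Real.tendsto_log_atTop).congr fun _ => rfl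

set_option maxHeartbeats 1000000 in
/-- If `ln ν_k = −k ln k + A k + o(k)` for a non-increasing positive sequence `ν`, then the
counting function `N(λ) = #{k : ν_k > λ}` satisfies
`N(λ) = Φ₁(λ;A) + o(|ln λ|/ln₂(λ)²)` as `λ ↓ 0`. -/
theorem counting_of_eigenvalue_asymptotics (A : ℝ) (ν : ℕ → ℝ)
    (hpos : ∀ k, 0 < ν k) (hmono : Antitone ν)
    (hasym : (fun k : ℕ => Real.log (ν k) - (-(k * Real.log k) + A * k))
      =o[atTop] fun k : ℕ => (k : ℝ)) :
    (fun x : ℝ => (Set.ncard {k : ℕ | x < ν k} : ℝ) - Phi1 x A)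
      =o[𝓝[>] (0 : ℝ)] fun x => |Real.log x| / (lnTwo x) ^ 2 := by
  classical
  -- ν tends to 0
  have hlogν : Tendsto (fun k : ℕ => Real.log (ν k)) atTop atBot := by
    have h1 := hasym.def one_pos
    have hb : Tendsto (fun k : ℕ => (k : ℝ) * (Real.log k - (A + 1))) atTop atTop := by
      refine Tendsto.atTop_mul_atTop₀ tendsto_natCast_atTop_atTop ?_
      have hlogk : Tendsto (fun k : ℕ => Real.log k) atTop atTop :=
        Real.tendsto_log_atTop.comp tendsto_natCast_atTop_atTop
      exact (tendsto_atTop_add_const_right _ (-(A + 1)) hlogk).congr fun k => by ring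
    have hb' : Tendsto (fun k : ℕ => -((k : ℝ) * (Real.log k - (A + 1)))) atTop atBot :=
      tendsto_neg_atBot_iff.2 hb
    refine tendsto_atBot_mono' atTop ?_ hb'
    filter_upwards [h1] with k hk
    have hk' : |Real.log (ν k) - (-((k : ℝ) * Real.log k) + A * k)| ≤ (k : ℝ) := by
      simpa [Real.norm_eq_abs, abs_of_nonneg (show (0:ℝ) ≤ (k:ℝ) by positivity)] using hk
    have h2 := (abs_le.1 hk').2
    have hexp : -((k:ℝ) * (Real.log k - (A+1))) = -((k:ℝ) * Real.log k) + A * k + k := by ring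
    linarith [hexp.ge]
  have hν0 : Tendsto ν atTop (𝓝 0) := by
    have := Real.tendsto_exp_atBot.comp hlogν
    exact this.congr fun k => Real.exp_log (hpos k)
  have hne : ∀ x : ℝ, 0 < x → {k : ℕ | ν k ≤ x}.Nonempty := by
    intro x hx
    obtain ⟨k, hk⟩ := (hν0.eventually (eventually_le_nhds hx)).exists
    exact ⟨k, hk⟩
  set N : ℝ → ℕ := fun x => sInf {k : ℕ | ν k ≤ x} with hNdef
  have hNmem : ∀ x : ℝ, 0 < x → ν (N x) ≤ x := fun x hx => Nat.sInf_mem (hne x hx)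
  have hcard : ∀ x : ℝ, 0 < x → {k : ℕ | x < ν k} = Set.Iio (N x) := by
    intro x hx
    ext k
    simp only [Set.mem_setOf_eq, Set.mem_Iio]
    constructor
    · intro hk
      by_contra hcon
      push_neg at hcon
      exact absurd (le_trans (hmono hcon) (hNmem x hx)) (not_le.2 hk)
    · intro hk
      have := Nat.notMem_of_lt_sInf hk
      simp only [Set.mem_setOf_eq] at this
      exact lt_of_not_ge this
  rw [Asymptotics.isLittleO_iff]
  intro ε hε
  set ε₁ := ε / 16 with hε₁
  obtain ⟨K₀, hK₀⟩ := eventually_atTop.1 (hasym.def (show (0 : ℝ) < ε₁ by positivity))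
  have hLx : Tendsto (fun x : ℝ => -Real.log x) (𝓝[>] (0 : ℝ)) atTop :=
    tendsto_neg_atBot_iff.1 (by simpa using Real.tendsto_log_nhdsGT_zero)
  filter_upwards [Ioo_mem_nhdsGT_of_mem (by norm_num : (0:ℝ) ∈ Set.Ico (0:ℝ) 1),
    hLx.eventually (eventually_gt_atTop (0 : ℝ)),
    hLx.eventually (Real.tendsto_log_atTop.eventually_gt_atTop 1),
    hLx.eventually ((key_tendsto A (ε/2)).eventually_const_le (by linarith : ε/4 < ε/2)),
    hLx.eventually ((key_tendsto A (-(ε/2))).eventually_le_const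
      (by linarith : -(ε/2) < -(ε/4))),
    hLx.eventually (hX2.eventually_ge_atTop (2/ε)),
    hLx.eventually ((h_w_L (A + ε/2)).eventually (eventually_le_nhds one_pos)),
    hLx.eventually ((hmfun A (-(ε/2))).eventually_ge_atTop ((K₀ : ℝ) + Real.exp A + 2)),
    hLx.eventually (hX.eventually_ge_atTop 1)]
    with x hx h0 h1 h2 h3 hY hw1 h6 h7
  set L : ℝ := -Real.log x with hLdef
  have hx0 : 0 < x := hx.1
  have hL0 : 0 < L := h0
  have ht0 : 0 < Real.log L := by linarith
  have hXpos : 0 < L / Real.log L := div_pos hL0 ht0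
  have hYpos : 0 < L / (Real.log L) ^ 2 := by positivity
  have habs : |Real.log x| = L := by
    rw [hLdef]; exact abs_of_neg (Real.log_neg hx.1 hx.2)
  have hlnTwo : lnTwo x = Real.log L := by rw [lnTwo, habs]
  have hPhi : Phi1 x A = mfun A 0 L := by
    rw [Phi1, Phi0, habs, hlnTwo, mfun]; ring
  set m := mfun A 0 L with hm
  set mp := mfun A (ε/2) L with hmp
  set mm := mfun A (-(ε/2)) L with hmm
  have hmp_eq : mp = m + ε/2 * (L / (Real.log L) ^ 2) := by
    rw [hmp, hm, mfun, mfun]; ring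
  have hmm_eq : mm = m - ε/2 * (L / (Real.log L) ^ 2) := by
    rw [hmm, hm, mfun, mfun]; ring
  have hmm_pos : 0 < mm := lt_of_lt_of_le (by positivity) h6
  have hmpmm : mm ≤ mp := by
    have hh : 0 ≤ ε/2 * (L / (Real.log L) ^ 2) := by positivity
    rw [hmp_eq, hmm_eq]; linarith
  have hmp2 : mp ≤ 2 * (L / Real.log L) := by
    rw [hmp, mfun]
    have h5' : (Real.log (Real.log L) + A + ε/2) / Real.log L ≤ 1 := by
      rw [show Real.log (Real.log L) + A + ε/2 = Real.log (Real.log L) + (A + ε/2) from by ring]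
      exact hw1
    have := mul_le_mul_of_nonneg_left (show 1 + (Real.log (Real.log L) + A + ε/2) / Real.log L ≤ 2 by linarith) hXpos.le
    linarith
  set kp := ⌈mp⌉₊ with hkp
  set km := ⌊mm⌋₊ with hkm
  have hkp_ge : mp ≤ (kp : ℝ) := Nat.le_ceil mp
  have hkp_le : (kp : ℝ) ≤ mp + 1 := (Nat.ceil_lt_add_one (le_of_lt (lt_of_lt_of_le hmm_pos hmpmm))).le
  have hkm_le : (km : ℝ) ≤ mm := Nat.floor_le hmm_pos.le
  have hkm_gt : mm - 1 < (km : ℝ) := Nat.sub_one_lt_floor mm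
  -- gfun value bounds
  have hgp : L + ε/4 * (L / Real.log L) ≤ gfun A mp := by
    have heq : gfun A mp - L = (gfun A mp - L) * Real.log L / L * (L / Real.log L) := by
      field_simp
    have h2' := mul_le_mul_of_nonneg_right h2 hXpos.le
    rw [← heq] at h2'
    linarith
  have hgm : gfun A mm ≤ L - ε/4 * (L / Real.log L) := by
    have heq : gfun A mm - L = (gfun A mm - L) * Real.log L / L * (L / Real.log L) := by
      field_simp
    have h3' := mul_le_mul_of_nonneg_right h3 hXpos.le
    rw [← heq] at h3'
    have : -(ε/4) * (L / Real.log L) = -(ε/4 * (L / Real.log L)) := by ring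
    linarith [this.le, this.ge]
  -- hasym bound
  have hfb : ∀ k : ℕ, K₀ ≤ k →
      |Real.log (ν k) - (-((k : ℝ) * Real.log k) + A * k)| ≤ ε₁ * k := by
    intro k hk
    have := hK₀ k hk
    simpa [Real.norm_eq_abs, abs_of_nonneg (show (0:ℝ) ≤ (k:ℝ) by positivity)] using this
  have hK₀cast : (0 : ℝ) ≤ (K₀ : ℝ) := Nat.cast_nonneg _
  have hexp_pos : (0 : ℝ) < Real.exp A := Real.exp_pos A
  have hkm_real : (K₀ : ℝ) + Real.exp A + 1 ≤ (km : ℝ) := by linarith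
  have hkmK : K₀ ≤ km := by
    have : (K₀ : ℝ) ≤ (km : ℝ) := by linarith
    exact_mod_cast this
  have hkpK : K₀ ≤ kp := by
    have : (K₀ : ℝ) ≤ (kp : ℝ) := by linarith
    exact_mod_cast this
  have hmono' := (gfun_strictMonoOn A).monotoneOn
  have hmmIci : mm ∈ Set.Ici (Real.exp A) := by
    simp only [Set.mem_Ici]; linarith
  have hmpIci : mp ∈ Set.Ici (Real.exp A) := by
    simp only [Set.mem_Ici]; linarith
  have hkpIci : (kp : ℝ) ∈ Set.Ici (Real.exp A) := by
    simp only [Set.mem_Ici]; linarith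
  have hkmIci : (km : ℝ) ∈ Set.Ici (Real.exp A) := by
    simp only [Set.mem_Ici]; linarith
  have hgkp : gfun A mp ≤ gfun A (kp : ℝ) := hmono' hmpIci hkpIci hkp_ge
  have hgkm : gfun A (km : ℝ) ≤ gfun A mm := hmono' hkmIci hmmIci hkm_le
  have hlogx : Real.log x = -L := by rw [hLdef]; ring
  -- Claim 1 : ν kp ≤ x
  have hνkp : ν kp ≤ x := by
    have hb := abs_le.1 (hfb kp hkpK)
    have h₂ : ε₁ * (kp : ℝ) ≤ ε/4 * (L / Real.log L) := by
      have hk3 : (kp : ℝ) ≤ 3 * (L / Real.log L) := by linarith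
      have : ε₁ * (kp : ℝ) ≤ ε₁ * (3 * (L / Real.log L)) :=
        mul_le_mul_of_nonneg_left hk3 (by positivity)
      rw [hε₁] at this ⊢
      linarith [mul_nonneg hε.le hXpos.le]
    have h₃ : Real.log (ν kp) ≤ Real.log x := by
      have hgf : gfun A (kp : ℝ) = (kp : ℝ) * Real.log (kp : ℝ) - A * kp := rfl
      rw [hlogx]
      linarith [hb.2, hgp, hgkp, hgf.le, hgf.ge]
    exact (Real.log_le_log_iff (hpos kp) hx0).1 h₃
  -- Claim 2 : x < ν km
  have hνkm : x < ν km := by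
    have hb := abs_le.1 (hfb km hkmK)
    have h₂ : ε₁ * (km : ℝ) < ε/4 * (L / Real.log L) := by
      have hk3 : (km : ℝ) ≤ 2 * (L / Real.log L) := by linarith
      have : ε₁ * (km : ℝ) ≤ ε₁ * (2 * (L / Real.log L)) :=
        mul_le_mul_of_nonneg_left hk3 (by positivity)
      rw [hε₁] at this ⊢
      linarith [mul_pos hε hXpos]
    have h₃ : Real.log x < Real.log (ν km) := by
      have hgf : gfun A (km : ℝ) = (km : ℝ) * Real.log (km : ℝ) - A * km := rfl
      rw [hlogx]
      linarith [hb.1, hgm, hgkm, hgf.le, hgf.ge]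
    exact (Real.log_lt_log_iff hx0 (hpos km)).1 h₃
  -- conclude
  have hNle : N x ≤ kp := Nat.sInf_le hνkp
  have hNgt : km < N x := by
    by_contra hcon
    push_neg at hcon
    exact absurd (le_trans (hmono hcon) (hNmem x hx0)) (not_le.2 hνkm)
  have hYge : 1 ≤ ε/2 * (L / (Real.log L) ^ 2) := by
    have := mul_le_mul_of_nonneg_left hY (le_of_lt (show (0:ℝ) < ε/2 by linarith))
    calc (1 : ℝ) = ε/2 * (2/ε) := by field_simp
    _ ≤ ε/2 * (L / (Real.log L) ^ 2) := this
  have hup : (N x : ℝ) ≤ m + ε * (L / (Real.log L) ^ 2) := by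
    have h' : (N x : ℝ) ≤ (kp : ℝ) := Nat.cast_le.2 hNle
    linarith
  have hlo : m - ε * (L / (Real.log L) ^ 2) ≤ (N x : ℝ) := by
    have h' : (km : ℝ) + 1 ≤ (N x : ℝ) := by exact_mod_cast Nat.succ_le_of_lt hNgt
    have hh : 0 ≤ ε/2 * (L / (Real.log L) ^ 2) := by positivity
    linarith
  have hcount : (Set.ncard {k : ℕ | x < ν k} : ℝ) = (N x : ℝ) := by
    rw [hcard x hx0, ← Finset.coe_range, Set.ncard_coe_finset, Finset.card_range]
  rw [hcount, hPhi, Real.norm_eq_abs, Real.norm_eq_abs, habs, hlnTwo,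
    abs_of_pos hYpos, abs_le]
  constructor <;> linarith
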